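/- arXiv:1404.2031 — 2 statements merged into one kernel-verified Lean document; each statement's English description precedes it below -/
import Mathlib

section
/- Let N ≥ 2, a > 0, λ > 0, p > 2, and let ν be a finite O(N)-invariant Borel measure on ℝ^N. Suppose u : ℝ^N → ℝ is C², u ∈ L²(ℝ^N), its gradient ∇u belongs to L²(ℝ^N; ℝ^N), u is not identically zero, and for every x ∈ ℝ^N one has −a·Δu(x) − 2∫(u(x+y) − u(x)) dν(y) + λ·u(x) = u⁺(x)^{p−1}. If x₀ ∈ ℝ^N is a global maximum point of u (i.e. u(x) ≤ u(x₀) for all x), then u(x₀) ≥ λ^{1/(p−2)}. -/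
open MeasureTheory
open scoped RealInnerProductSpace

/-- The Laplacian of `u : ℝ^N → ℝ`, computed in the standard orthonormal basis. -/
noncomputable def laplacian {N : ℕ} (u : EuclideanSpace ℝ (Fin N) → ℝ)
    (x : EuclideanSpace ℝ (Fin N)) : ℝ :=
  ∑ i : Fin N,
    fderiv ℝ (fun y => fderiv ℝ u y (EuclideanSpace.single i 1)) x (EuclideanSpace.single i 1)

section Helpers

variable {N : ℕ}

lemma line_hasDerivAt (v : EuclideanSpace ℝ (Fin N) → ℝ) (hv : Differentiable ℝ v)
    (x e : EuclideanSpace ℝ (Fin N)) (t : ℝ) :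
    HasDerivAt (fun s : ℝ => v (x + s • e)) (fderiv ℝ v (x + t • e) e) t := by
  have h1 : HasDerivAt (fun s : ℝ => x + s • e) e t := by
    simpa using (((hasDerivAt_id t).smul_const e).const_add x)
  have := (hv (x + t • e)).hasFDerivAt.comp_hasDerivAt t h1
  exact this

lemma dirDeriv_contDiff {v : EuclideanSpace ℝ (Fin N) → ℝ} (hv : ContDiff ℝ 2 v)
    (e : EuclideanSpace ℝ (Fin N)) :
    ContDiff ℝ 1 fun y => fderiv ℝ v y e :=
  (ContinuousLinearMap.apply ℝ ℝ e).contDiff.comp (hv.fderiv_right (m := 1) (by norm_num))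

lemma laplacian_nonpos_of_max {w : EuclideanSpace ℝ (Fin N) → ℝ} (hw : ContDiff ℝ 2 w)
    {q : EuclideanSpace ℝ (Fin N)} {δ : ℝ} (hδ : 0 < δ)
    (hmax : ∀ x ∈ Metric.ball q δ, w x ≤ w q) : laplacian w q ≤ 0 := by
  have hdw : Differentiable ℝ w := hw.differentiable (by norm_num)
  refine Finset.sum_nonpos fun i _ => ?_
  set e : EuclideanSpace ℝ (Fin N) := EuclideanSpace.single i 1 with he
  have hnorme : ‖e‖ = 1 := by simp [he]
  set g : ℝ → ℝ := fun s => w (q + s • e) with hg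
  set g1 : ℝ → ℝ := fun s => fderiv ℝ w (q + s • e) e with hg1
  set g2 : ℝ → ℝ := fun s =>
    fderiv ℝ (fun y => fderiv ℝ w y e) (q + s • e) e with hg2
  have hq0 : q + (0:ℝ) • e = q := by simp
  have hmem : ∀ s : ℝ, |s| < δ → q + s • e ∈ Metric.ball q δ := by
    intro s hs
    rw [Metric.mem_ball, dist_eq_norm]
    simpa [norm_smul, hnorme] using hs
  have hd1 : ∀ t, HasDerivAt g (g1 t) t := fun t => line_hasDerivAt w hdw q e t
  have hD2 : Differentiable ℝ fun y => fderiv ℝ w y e :=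
    (dirDeriv_contDiff hw e).differentiable one_ne_zero
  have hd2 : ∀ t, HasDerivAt g1 (g2 t) t := fun t => line_hasDerivAt _ hD2 q e t
  have hg2c : Continuous g2 := by
    have hc : Continuous fun y => fderiv ℝ (fun z => fderiv ℝ w z e) y e :=
      (ContinuousLinearMap.apply ℝ ℝ e).continuous.comp
        ((dirDeriv_contDiff hw e).continuous_fderiv one_ne_zero)
    exact hc.comp (by continuity)
  have key : g2 0 ≤ 0 := by
    by_contra hpos
    push_neg at hpos
    have hev : ∀ᶠ s in nhds (0:ℝ), 0 < g2 s :=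
      (hg2c.tendsto 0).eventually (eventually_gt_nhds hpos)
    rw [Metric.eventually_nhds_iff] at hev
    obtain ⟨η, hη, hηpos⟩ := hev
    set t := min (η/2) (δ/2) with ht
    have htpos : 0 < t := by positivity
    have htη : t < η := lt_of_le_of_lt (min_le_left _ _) (by linarith)
    have htδ : t < δ := lt_of_le_of_lt (min_le_right _ _) (by linarith)
    have hg2pos : ∀ s ∈ Set.Icc (0:ℝ) t, 0 < g2 s := by
      intro s hs
      apply hηpos
      rw [Real.dist_eq, sub_zero, abs_of_nonneg hs.1]
      exact lt_of_le_of_lt hs.2 htη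
    have hlocmax : IsLocalMax g 0 := by
      have : ∀ᶠ s in nhds (0:ℝ), g s ≤ g 0 := by
        rw [Metric.eventually_nhds_iff]
        refine ⟨δ, hδ, fun s hs => ?_⟩
        rw [Real.dist_eq, sub_zero] at hs
        have := hmax _ (hmem s hs)
        simpa [hg, hq0] using this
      exact this
    have h10 : g1 0 = 0 := by
      have := hlocmax.deriv_eq_zero
      rwa [(hd1 0).deriv] at this
    have hmono1 : StrictMonoOn g1 (Set.Icc 0 t) := by
      apply strictMonoOn_of_deriv_pos (convex_Icc 0 t)
      · exact (Differentiable.continuous fun s => (hd2 s).differentiableAt).continuousOn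
      · intro s hs
        rw [interior_Icc] at hs
        rw [(hd2 s).deriv]
        exact hg2pos s ⟨hs.1.le, hs.2.le⟩
    have hg1pos : ∀ s ∈ Set.Ioo (0:ℝ) t, 0 < g1 s := by
      intro s hs
      have := hmono1 ⟨le_refl 0, htpos.le⟩ ⟨hs.1.le, hs.2.le⟩ hs.1
      rwa [h10] at this
    have hmono : StrictMonoOn g (Set.Icc 0 t) := by
      apply strictMonoOn_of_deriv_pos (convex_Icc 0 t)
      · exact (Differentiable.continuous fun s => (hd1 s).differentiableAt).continuousOn
      · intro s hs
        rw [interior_Icc] at hs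
        rw [(hd1 s).deriv]
        exact hg1pos s hs
    have hgt : g 0 < g t := hmono ⟨le_rfl, htpos.le⟩ ⟨htpos.le, le_rfl⟩ htpos
    have hle : g t ≤ g 0 := by
      have := hmax _ (hmem t (by rwa [abs_of_pos htpos]))
      simpa [hg, hq0] using this
    linarith
  simpa [hg2, hq0] using key

end Helpers

section Barrier

variable {N : ℕ} (y₁ : EuclideanSpace ℝ (Fin N)) (α : ℝ)

noncomputable def bf : EuclideanSpace ℝ (Fin N) → ℝ :=
  fun x => Real.exp (-α * ‖x - y₁‖ ^ 2)

lemma bf_pos (x : EuclideanSpace ℝ (Fin N)) : 0 < bf y₁ α x := Real.exp_pos _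

lemma bf_contDiff : ContDiff ℝ 2 (bf y₁ α) := by
  apply Real.contDiff_exp.comp
  exact contDiff_const.mul ((contDiff_id.sub contDiff_const).norm_sq ℝ)

lemma bf_hasFDerivAt (x : EuclideanSpace ℝ (Fin N)) :
    HasFDerivAt (bf y₁ α) ((-2 * α * bf y₁ α x) • innerSL ℝ (x - y₁)) x := by
  have h1 : HasFDerivAt (fun x : EuclideanSpace ℝ (Fin N) => ‖x - y₁‖ ^ 2)
      (2 • innerSL ℝ (x - y₁)) x := by
    have := ((hasFDerivAt_id x).sub_const y₁).norm_sq
    simpa using this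
  have h2 := h1.const_mul (-α)
  have h3 := (Real.hasDerivAt_exp (-α * ‖x - y₁‖ ^ 2)).comp_hasFDerivAt x h2
  have h4 : HasFDerivAt (bf y₁ α)
      (Real.exp (-α * ‖x - y₁‖ ^ 2) • -α • 2 • innerSL ℝ (x - y₁)) x := h3
  refine h4.congr_fderiv ?_
  ext v
  simp [bf, ContinuousLinearMap.smul_apply, innerSL_apply_apply]
  ring

lemma bf_fderiv_apply (x e : EuclideanSpace ℝ (Fin N)) :
    fderiv ℝ (bf y₁ α) x e = -2 * α * ⟪x - y₁, e⟫ * bf y₁ α x := by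
  rw [(bf_hasFDerivAt y₁ α x).fderiv]
  simp only [ContinuousLinearMap.smul_apply, innerSL_apply_apply, smul_eq_mul]
  ring

lemma bf_second (x e : EuclideanSpace ℝ (Fin N)) :
    fderiv ℝ (fun y => fderiv ℝ (bf y₁ α) y e) x e
      = (-2 * α * ⟪e, e⟫ + 4 * α ^ 2 * ⟪x - y₁, e⟫ ^ 2) * bf y₁ α x := by
  have hfun : (fun y => fderiv ℝ (bf y₁ α) y e)
      = fun y => (-2 * α * ⟪y - y₁, e⟫) * bf y₁ α y := by
    funext y; rw [bf_fderiv_apply]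
  rw [hfun]
  have hbase : HasFDerivAt (fun y : EuclideanSpace ℝ (Fin N) => ⟪y - y₁, e⟫)
      (innerSL ℝ e) x := by
    have h0 : HasFDerivAt (fun y : EuclideanSpace ℝ (Fin N) => (innerSL ℝ e) (y - y₁))
        ((innerSL ℝ e).comp (ContinuousLinearMap.id ℝ _)) x :=
      (innerSL ℝ e).hasFDerivAt.comp x ((hasFDerivAt_id x).sub_const y₁)
    have heq : (fun y : EuclideanSpace ℝ (Fin N) => (innerSL ℝ e) (y - y₁))
        = fun y => ⟪y - y₁, e⟫ := by
      funext y; rw [innerSL_apply_apply, real_inner_comm]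
    rw [heq] at h0
    simpa using h0
  have hA : HasFDerivAt (fun y : EuclideanSpace ℝ (Fin N) => -2 * α * ⟪y - y₁, e⟫)
      ((-2 * α) • innerSL ℝ e) x := hbase.const_mul (-2 * α)
  have hprod := hA.mul (bf_hasFDerivAt y₁ α x)
  rw [show (fun y => -2 * α * ⟪y - y₁, e⟫ * bf y₁ α y)
      = (fun y => -2 * α * ⟪y - y₁, e⟫) * bf y₁ α from rfl, hprod.fderiv]
  simp only [ContinuousLinearMap.add_apply, ContinuousLinearMap.smul_apply, innerSL_apply_apply,
    smul_eq_mul]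
  ring

lemma bf_laplacian (x : EuclideanSpace ℝ (Fin N)) :
    laplacian (bf y₁ α) x = (4 * α ^ 2 * ‖x - y₁‖ ^ 2 - 2 * α * N) * bf y₁ α x := by
  unfold laplacian
  have hterm : ∀ i : Fin N,
      fderiv ℝ (fun y => fderiv ℝ (bf y₁ α) y (EuclideanSpace.single i 1)) x
        (EuclideanSpace.single i 1)
      = (-2 * α + 4 * α ^ 2 * ((x - y₁) i) ^ 2) * bf y₁ α x := by
    intro i
    rw [bf_second]
    have h1 : ⟪(EuclideanSpace.single i (1:ℝ)), EuclideanSpace.single i (1:ℝ)⟫ = 1 := by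
      rw [EuclideanSpace.inner_single_left]
      simp
    have h2 : ⟪x - y₁, EuclideanSpace.single i (1:ℝ)⟫ = (x - y₁) i := by
      rw [EuclideanSpace.inner_single_right]
      simp
    rw [h1, h2]
    ring
  rw [Finset.sum_congr rfl (fun i _ => hterm i), ← Finset.sum_mul]
  congr 1
  have hsum : ∑ i : Fin N, (-2 * α + 4 * α ^ 2 * ((x - y₁) i) ^ 2)
      = -2 * α * N + 4 * α ^ 2 * ∑ i : Fin N, ((x - y₁) i) ^ 2 := by
    rw [Finset.sum_add_distrib, Finset.sum_const, ← Finset.mul_sum]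
    simp [Finset.card_univ]
    ring
  rw [hsum]
  have hnorm : ∑ i : Fin N, ((x - y₁) i) ^ 2 = ‖x - y₁‖ ^ 2 := by
    rw [EuclideanSpace.norm_eq, Real.sq_sqrt (by positivity)]
    simp [Real.norm_eq_abs, sq_abs]
  rw [hnorm]
  ring

lemma laplacian_add_const_mul {N : ℕ} {u f : EuclideanSpace ℝ (Fin N) → ℝ}
    (hu : ContDiff ℝ 2 u) (hf : ContDiff ℝ 2 f) (ε : ℝ)
    (x : EuclideanSpace ℝ (Fin N)) :
    laplacian (fun y => u y + ε * f y) x = laplacian u x + ε * laplacian f x := by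
  unfold laplacian
  rw [Finset.mul_sum, ← Finset.sum_add_distrib]
  apply Finset.sum_congr rfl
  intro i _
  set e := EuclideanSpace.single (𝕜 := ℝ) i (1:ℝ) with he
  have hdu : Differentiable ℝ u := hu.differentiable (by norm_num)
  have hdf : Differentiable ℝ f := hf.differentiable (by norm_num)
  have h1 : (fun y => fderiv ℝ (fun z => u z + ε * f z) y e)
      = fun y => fderiv ℝ u y e + ε * fderiv ℝ f y e := by
    funext y
    rw [fderiv_fun_add (hdu y) ((hdf y).const_mul ε), fderiv_const_mul (hdf y)]
    simp
  rw [h1]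
  have hgu := ((dirDeriv_contDiff hu e).differentiable one_ne_zero) x
  have hgf := ((dirDeriv_contDiff hf e).differentiable one_ne_zero) x
  rw [fderiv_fun_add hgu (hgf.const_mul ε), fderiv_const_mul hgf]
  simp

end Barrier
set_option maxHeartbeats 3000000 in
theorem value_at_maximum_point
    (N : ℕ) (hN : 2 ≤ N)
    (a : ℝ) (ha : 0 < a) (lam : ℝ) (hlam : 0 < lam) (p : ℝ) (hp : 2 < p)
    (ν : Measure (EuclideanSpace ℝ (Fin N))) [IsFiniteMeasure ν]
    (hinv : ∀ (g : EuclideanSpace ℝ (Fin N) ≃ₗᵢ[ℝ] EuclideanSpace ℝ (Fin N))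
      (B : Set (EuclideanSpace ℝ (Fin N))), MeasurableSet B → ν (g ⁻¹' B) = ν B)
    (u : EuclideanSpace ℝ (Fin N) → ℝ)
    (hu : ContDiff ℝ 2 u)
    (huL2 : MemLp u 2 (volume : Measure (EuclideanSpace ℝ (Fin N))))
    (hgrad : MemLp (fun x => gradient u x) 2 (volume : Measure (EuclideanSpace ℝ (Fin N))))
    (hne : u ≠ 0)
    (heq : ∀ x, -a * laplacian u x - 2 * (∫ y, (u (x + y) - u x) ∂ν) + lam * u x
      = max (u x) 0 ^ (p - 1))
    (x₀ : EuclideanSpace ℝ (Fin N)) (hmax : ∀ x, u x ≤ u x₀) :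
    lam ^ (1 / (p - 2)) ≤ u x₀ := by
  classical
  have hCont : Continuous u := hu.continuous
  haveI : Nonempty (Fin N) := ⟨⟨0, by omega⟩⟩
  haveI hnontriv : Nontrivial (EuclideanSpace ℝ (Fin N)) := by
    refine ⟨0, EuclideanSpace.single ⟨0, by omega⟩ 1, fun h => ?_⟩
    have := congrArg (fun v : EuclideanSpace ℝ (Fin N) => v ⟨0, by omega⟩) h
    simp [EuclideanSpace.single_apply] at this
  have hlapx₀ : laplacian u x₀ ≤ 0 :=
    laplacian_nonpos_of_max hu one_pos (fun x _ => hmax x)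
  have hIx₀ : (∫ y, (u (x₀ + y) - u x₀) ∂ν) ≤ 0 :=
    integral_nonpos fun y => sub_nonpos.2 (hmax _)
  rcases lt_trichotomy (u x₀) 0 with hMneg | hMzero | hMpos
  · -- `u x₀ < 0` contradicts `u ∈ L²` since volume is infinite
    exfalso
    set M := u x₀ with hM
    have hvol : (volume : Measure (EuclideanSpace ℝ (Fin N))) Set.univ = ⊤ :=
      MeasureTheory.measure_univ_of_isAddLeftInvariant _
    have hint : Integrable (fun x => ‖u x‖ ^ ((2:ENNReal)).toReal) volume :=
      huL2.integrable_norm_rpow two_ne_zero ENNReal.ofNat_ne_top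
    have htr : ((2:ENNReal)).toReal = (2:ℝ) := by simp
    rw [htr] at hint
    have hfin := hint.2
    have hlow : ∀ x, ENNReal.ofReal (M ^ 2) ≤ (‖(‖u x‖ ^ (2:ℝ) : ℝ)‖₊ : ENNReal) := by
      intro x
      have h1 : -M ≤ ‖u x‖ := by
        rw [Real.norm_eq_abs]
        have := hmax x
        rw [abs_of_nonpos (by linarith)]
        linarith
      have h2 : M ^ 2 ≤ ‖u x‖ ^ (2:ℝ) := by
        rw [Real.rpow_two]
        nlinarith [norm_nonneg (u x)]
      calc ENNReal.ofReal (M ^ 2) ≤ ENNReal.ofReal (‖u x‖ ^ (2:ℝ)) :=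
            ENNReal.ofReal_le_ofReal h2
        _ = (‖(‖u x‖ ^ (2:ℝ) : ℝ)‖₊ : ENNReal) := by
            rw [← Real.enorm_eq_ofReal (by positivity)]; rfl
    have hge : (∫⁻ x, ENNReal.ofReal (M ^ 2) ∂(volume : Measure (EuclideanSpace ℝ (Fin N))))
        ≤ ∫⁻ x, (‖(‖u x‖ ^ (2:ℝ) : ℝ)‖₊ : ENNReal) ∂volume := lintegral_mono hlow
    rw [lintegral_const, hvol, ENNReal.mul_top (by
      simp only [ne_eq, ENNReal.ofReal_eq_zero, not_le]
      nlinarith)] at hge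
    rw [MeasureTheory.HasFiniteIntegral] at hfin
    exact (lt_irrefl _ (lt_of_le_of_lt hge hfin)).elim
  · -- `u x₀ = 0` : contradiction via the strong maximum principle
    exfalso
    have hle : ∀ x, u x ≤ 0 := fun x => hMzero ▸ hmax x
    have hrpow0 : ∀ x, max (u x) 0 ^ (p - 1) = 0 := fun x => by
      rw [max_eq_right (hle x), Real.zero_rpow (by norm_num; linarith)]
    set c := (ν Set.univ).toReal with hc
    have hc0 : 0 ≤ c := ENNReal.toReal_nonneg
    set K := (lam + 2 * c) / a with hKdef
    have hKpos : 0 < K := div_pos (by linarith) ha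
    have hlapineq : ∀ x, K * u x ≤ laplacian u x := by
      intro x
      have hI : (∫ y, (u (x + y) - u x) ∂ν) ≤ -c * u x := by
        by_cases hInt : Integrable (fun y => u (x + y) - u x) ν
        · have hint2 : Integrable (fun y => u (x + y)) ν := by
            have h' : Integrable (fun y => u (x + y) - u x + u x) ν :=
              hInt.add (integrable_const (u x))
            have heqfun : (fun y => u (x + y) - u x + u x) = fun y => u (x + y) := by
              funext y; ring
            rwa [heqfun] at h'
          have hsplit : (∫ y, (u (x + y) - u x) ∂ν)
              = (∫ y, u (x + y) ∂ν) - c * u x := by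
            rw [integral_sub hint2 (integrable_const _), integral_const]
            simp [hc, smul_eq_mul, Measure.real]
          rw [hsplit]
          have : (∫ y, u (x + y) ∂ν) ≤ 0 := integral_nonpos fun y => hle _
          linarith
        · rw [integral_undef hInt]
          have := mul_nonneg hc0 (neg_nonneg.2 (hle x))
          linarith
      have h := heq x
      rw [hrpow0 x] at h
      have halap : a * laplacian u x = lam * u x - 2 * (∫ y, (u (x + y) - u x) ∂ν) := by
        linarith
      have h2 : a * (K * u x) ≤ a * laplacian u x := by
        rw [halap]
        have : a * (K * u x) = (lam + 2 * c) * u x := by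
          rw [hKdef]
          field_simp
        rw [this]
        linarith [hI]
      exact le_of_mul_le_mul_left h2 ha
    clear_value K c
    -- a point where u is negative
    obtain ⟨y₀, hy₀⟩ : ∃ x, u x ≠ 0 := by
      by_contra h
      push_neg at h
      exact hne (funext h)
    have hy₀neg : u y₀ < 0 := lt_of_le_of_ne (hle y₀) hy₀
    set Z : Set (EuclideanSpace ℝ (Fin N)) := {x | u x = 0} with hZdef
    have hZc : IsClosed Z := isClosed_eq hCont continuous_const
    have hZne : Z.Nonempty := ⟨x₀, hMzero⟩
    set r := Metric.infDist y₀ Z with hrdef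
    have hrpos : 0 < r :=
      (hZc.notMem_iff_infDist_pos hZne).1 (fun hy => hy₀ hy)
    obtain ⟨z, hzZ, hzd⟩ := hZc.exists_infDist_eq_dist hZne y₀
    rw [← hrdef] at hzd
    have huz : u z = 0 := hzZ
    have hball : ∀ x, dist x y₀ < r → u x < 0 := by
      intro x hx
      rcases lt_or_eq_of_le (hle x) with h | h
      · exact h
      · exfalso
        have hxZ : x ∈ Z := h
        have := Metric.infDist_le_dist_of_mem (x := y₀) hxZ
        rw [← hrdef, dist_comm] at this
        linarith
    clear_value Z
    clear_value r
    -- constants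
    set r' := min r 1 with hr'def
    have hr'pos : 0 < r' := lt_min hrpos one_pos
    have hr'le1 : r' ≤ 1 := min_le_right _ _
    have hr'ler : r' ≤ r := min_le_left _ _
    set α := (2 * N + K + 1) / r' ^ 2 with hαdef
    have hαpos : 0 < α := by positivity
    have hαr : α * r' ^ 2 = 2 * N + K + 1 := by
      rw [hαdef]
      field_simp
    have hα1 : 1 ≤ α := by
      have hnum : (1:ℝ) ≤ 2 * N + K + 1 := by
        have : (0:ℝ) ≤ (N:ℝ) := Nat.cast_nonneg N
        linarith
      have hsq : r' ^ 2 ≤ 1 := by nlinarith [hr'le1, hr'pos]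
      calc (1:ℝ) ≤ 2 * N + K + 1 := hnum
        _ = α * r' ^ 2 := hαr.symm
        _ ≤ α * 1 := mul_le_mul_of_nonneg_left hsq hαpos.le
        _ = α := mul_one α
    clear_value r' α
    -- the key barrier estimate on the annulus
    have hbarrier : ∀ x : EuclideanSpace ℝ (Fin N), r / 2 ≤ dist x y₀ →
        (K + 1) * bf y₀ α x ≤ laplacian (bf y₀ α) x := by
      intro x hx
      rw [bf_laplacian]
      have hd : ‖x - y₀‖ = dist x y₀ := (dist_eq_norm x y₀).symm
      have h4 : α ^ 2 * r ^ 2 - 2 * α * N ≥ K + 1 := by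
        have h5 : α ^ 2 * r' ^ 2 = α * (2 * N + K + 1) := by
          rw [← hαr]; ring
        have hrr : r' ^ 2 ≤ r ^ 2 := by nlinarith [hr'ler, hr'pos]
        have h6 : α ^ 2 * r' ^ 2 ≤ α ^ 2 * r ^ 2 :=
          mul_le_mul_of_nonneg_left hrr (sq_nonneg α)
        have h7 : α * (2 * N + K + 1) - 2 * α * N = α * (K + 1) := by ring
        have h8' : K + 1 ≤ α * (K + 1) := le_mul_of_one_le_left (by linarith) hα1
        linarith
      have h8 : 4 * α ^ 2 * ‖x - y₀‖ ^ 2 - 2 * α * N ≥ K + 1 := by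
        have hdist : r / 2 ≤ ‖x - y₀‖ := by rw [hd]; exact hx
        have hdd : (r / 2) * (r / 2) ≤ ‖x - y₀‖ * ‖x - y₀‖ :=
          mul_self_le_mul_self (by linarith) hdist
        have hmul : α ^ 2 * ((r / 2) * (r / 2)) ≤ α ^ 2 * (‖x - y₀‖ * ‖x - y₀‖) :=
          mul_le_mul_of_nonneg_left hdd (sq_nonneg α)
        nlinarith [hmul, h4]
      exact mul_le_mul_of_nonneg_right h8 (bf_pos y₀ α x).le
    -- δ : negative bound on the inner sphere
    have hsne : (Metric.sphere y₀ (r / 2)).Nonempty :=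
      NormedSpace.sphere_nonempty.mpr (by linarith)
    obtain ⟨xm, hxmS, hxm⟩ :=
      (isCompact_sphere y₀ (r / 2)).exists_isMaxOn hsne hCont.continuousOn
    set δ := -u xm with hδdef
    have hδpos : 0 < δ := by
      have : u xm < 0 := hball xm (by
        rw [Metric.mem_sphere] at hxmS
        rw [hxmS]; linarith)
      simp [hδdef]; linarith
    set C := Real.exp (-α * r ^ 2) with hCdef
    have hCpos : 0 < C := Real.exp_pos _
    -- the perturbed function and the annulus
    set w : EuclideanSpace ℝ (Fin N) → ℝ := fun x => u x + δ * bf y₀ α x with hwdef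
    have hwcont : Continuous w := by
      apply hCont.add
      exact (continuous_const.mul (bf_contDiff y₀ α).continuous)
    have hwCD : ContDiff ℝ 2 w := hu.add (contDiff_const.mul (bf_contDiff y₀ α))
    set A : Set (EuclideanSpace ℝ (Fin N)) :=
      Metric.closedBall y₀ r \ Metric.ball y₀ (r / 2) with hAdef
    have hAcomp : IsCompact A := (isCompact_closedBall y₀ r).diff Metric.isOpen_ball
    have hdzy : dist z y₀ = r := by rw [dist_comm]; exact hzd.symm
    have hzA : z ∈ A := by
      constructor
      · rw [Metric.mem_closedBall, hdzy]
      · intro hzb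
        rw [Metric.mem_ball, hdzy] at hzb
        linarith
    have houter_bf : ∀ x : EuclideanSpace ℝ (Fin N), dist x y₀ = r → bf y₀ α x = C := by
      intro x hx
      rw [hCdef]
      unfold bf
      rw [← dist_eq_norm, hx]
    have hwz : w z = δ * C := by
      rw [hwdef]
      simp only
      rw [houter_bf z hdzy, huz]
      simp
    obtain ⟨q, hqA, hqmax⟩ := hAcomp.exists_isMaxOn ⟨z, hzA⟩ hwcont.continuousOn
    have hwq : δ * C ≤ w q := by
      rw [← hwz]
      exact hqmax hzA
    have hq1 : r / 2 ≤ dist q y₀ := by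
      have := hqA.2
      rw [Metric.mem_ball] at this
      linarith [not_lt.1 this]
    have hq2 : dist q y₀ ≤ r := by
      have := hqA.1
      rwa [Metric.mem_closedBall] at this
    -- q cannot be on the inner sphere
    have hnotinner : dist q y₀ ≠ r / 2 := by
      intro hqin
      have hbfq : bf y₀ α q < 1 := by
        unfold bf
        rw [← Real.exp_zero]
        apply Real.exp_lt_exp.2
        have : ‖q - y₀‖ = r / 2 := by rw [← dist_eq_norm, hqin]
        nlinarith [hrpos, hαpos]
      have hqS : q ∈ Metric.sphere y₀ (r / 2) := by rwa [Metric.mem_sphere]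
      have huq : u q ≤ -δ := by
        have h' : u q ≤ u xm := hxm hqS
        simp only [hδdef]
        linarith [h']
      have hwqv : w q = u q + δ * bf y₀ α q := by rw [hwdef]
      have hδbf : δ * bf y₀ α q < δ * 1 := mul_lt_mul_of_pos_left hbfq hδpos
      have hwqneg : w q < 0 := by rw [hwqv]; linarith
      have hδC : 0 < δ * C := mul_pos hδpos hCpos
      linarith
    -- q cannot be in the open annulus
    have hnotint : dist q y₀ ≠ r := by
      intro hqout
      -- impossible: then u q = 0 and the Hopf boundary argument applies
      have hbfq : bf y₀ α q = C := houter_bf q hqout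
      have huq0 : u q = 0 := by
        have h1 : w q = u q + δ * C := by rw [hwdef]; simp only [hbfq]
        have := hle q
        by_contra hne'
        have : u q < 0 := lt_of_le_of_ne (hle q) hne'
        -- then w q < δ * C contradicting hwq
        linarith [hwq, h1]
      -- q is a global maximum of u, so the directional derivative vanishes
      set dir := y₀ - q with hdirdef
      have hqglob : ∀ x, u x ≤ u q := by
        intro x; rw [huq0]; exact hle x
      have hfd_u : fderiv ℝ u q dir = 0 := by
        have hloc : IsLocalMax (fun s : ℝ => u (q + s • dir)) 0 := by
          apply Filter.Eventually.of_forall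
          intro s
          simpa using hqglob (q + s • dir)
        have hder := line_hasDerivAt u (hu.differentiable (by norm_num)) q dir 0
        rw [show q + (0:ℝ) • dir = q by simp] at hder
        have := hloc.deriv_eq_zero
        rwa [hder.deriv] at this
      -- derivative of w along dir at q is positive
      have hqy : ‖q - y₀‖ = r := by rw [← dist_eq_norm, hqout]
      have hfd_bf : fderiv ℝ (bf y₀ α) q dir = 2 * α * r ^ 2 * C := by
        rw [bf_fderiv_apply]
        have : ⟪q - y₀, dir⟫ = -(r ^ 2) := by
          rw [hdirdef, ← neg_sub q y₀, inner_neg_right,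
            real_inner_self_eq_norm_sq, hqy]
        rw [this, hbfq]
        ring
      have hDpos : 0 < δ * (2 * α * r ^ 2 * C) := by positivity
      -- w has derivative δ * (2αr²C) > 0 at 0 along the segment towards y₀
      have hwdiff : Differentiable ℝ w :=
        hwCD.differentiable (by norm_num)
      have hfd_w : fderiv ℝ w q dir = δ * (2 * α * r ^ 2 * C) := by
        have hdu : DifferentiableAt ℝ u q := (hu.differentiable (by norm_num)) q
        have hdbf : DifferentiableAt ℝ (bf y₀ α) q := ((bf_contDiff y₀ α).differentiable (by norm_num)) q
        rw [hwdef]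
        rw [fderiv_fun_add hdu (hdbf.const_mul δ), fderiv_const_mul hdbf]
        simp only [ContinuousLinearMap.add_apply, ContinuousLinearMap.smul_apply, smul_eq_mul]
        rw [hfd_u, hfd_bf]
        ring
      have hψ : HasDerivAt (fun s : ℝ => w (q + s • dir)) (δ * (2 * α * r ^ 2 * C)) 0 := by
        have := line_hasDerivAt w hwdiff q dir 0
        rw [show q + (0:ℝ) • dir = q by simp, hfd_w] at this
        exact this
      -- but w (q + t • dir) ≤ w q for t ∈ (0, 1/2]
      have hseg : ∀ t : ℝ, 0 ≤ t → t ≤ 1 / 2 → w (q + t • dir) ≤ w q := by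
        intro t ht0 ht1
        apply hqmax
        have hpt : q + t • dir - y₀ = (1 - t) • (q - y₀) := by
          rw [hdirdef]
          module
        have hdist : dist (q + t • dir) y₀ = (1 - t) * r := by
          rw [dist_eq_norm, hpt, norm_smul, hqy, Real.norm_eq_abs,
            abs_of_nonneg (by linarith)]
        constructor
        · rw [Metric.mem_closedBall, hdist]
          nlinarith [hrpos]
        · rw [Metric.mem_ball, hdist]
          push_neg
          nlinarith [hrpos]
      -- contradiction via the positive derivative
      have hslope := hasDerivAt_iff_tendsto_slope.1 hψ
      have hslope' : Filter.Tendsto (slope (fun s : ℝ => w (q + s • dir)) 0)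
          (nhdsWithin 0 (Set.Ioi 0)) (nhds (δ * (2 * α * r ^ 2 * C))) :=
        hslope.mono_left (nhdsWithin_mono 0 (fun t ht => ne_of_gt ht))
      have hev : ∀ᶠ t in nhdsWithin (0:ℝ) (Set.Ioi 0),
          0 < slope (fun s : ℝ => w (q + s • dir)) 0 t :=
        hslope'.eventually (eventually_gt_nhds hDpos)
      have hev2 : ∀ᶠ t in nhdsWithin (0:ℝ) (Set.Ioi 0), t ∈ Set.Ioo (0:ℝ) (1/2) :=
        Ioo_mem_nhdsGT_of_mem (by norm_num : (0:ℝ) ∈ Set.Ico (0:ℝ) (1/2))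
      obtain ⟨t, hts, htIoo⟩ := (hev.and hev2).exists
      have htpos : 0 < t := htIoo.1
      rw [slope_def_field] at hts
      have : w (q + t • dir) ≤ w q := hseg t htpos.le htIoo.2.le
      have hq0 : q + (0:ℝ) • dir = q := by simp
      rw [div_pos_iff] at hts
      rcases hts with ⟨h1, h2⟩ | ⟨h1, h2⟩
      · rw [hq0] at h1
        simp only [sub_pos] at h1
        linarith
      · simp only [sub_zero] at h2
        linarith
    -- hence q is in the open annulus, interior maximum: contradiction
    have hq1' : r / 2 < dist q y₀ := lt_of_le_of_ne hq1 (Ne.symm hnotinner)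
    have hq2' : dist q y₀ < r := lt_of_le_of_ne hq2 hnotint
    set ρ := min (dist q y₀ - r / 2) (r - dist q y₀) with hρdef
    have hρpos : 0 < ρ := lt_min (by linarith) (by linarith)
    have hlocal : ∀ x ∈ Metric.ball q ρ, w x ≤ w q := by
      intro x hx
      rw [Metric.mem_ball] at hx
      apply hqmax
      have hd1 : dist x y₀ ≤ dist x q + dist q y₀ := dist_triangle x q y₀
      have hd2 : dist q y₀ ≤ dist q x + dist x y₀ := dist_triangle q x y₀
      rw [dist_comm q x] at hd2
      have hρ1 : ρ ≤ dist q y₀ - r / 2 := min_le_left _ _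
      have hρ2 : ρ ≤ r - dist q y₀ := min_le_right _ _
      constructor
      · rw [Metric.mem_closedBall]
        linarith
      · rw [Metric.mem_ball]
        push_neg
        linarith
    have hlapw : laplacian w q ≤ 0 := laplacian_nonpos_of_max hwCD hρpos hlocal
    have hsplit : laplacian w q = laplacian u q + δ * laplacian (bf y₀ α) q := by
      rw [hwdef]
      exact laplacian_add_const_mul hu (bf_contDiff y₀ α) δ q
    have hbar := hbarrier q hq1'.le
    have hlapu := hlapineq q
    have hwqpos : 0 < w q := lt_of_lt_of_le (by positivity) hwq
    -- laplacian w q ≥ K u q + δ (K+1) bf q > K w q ≥ 0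
    have hbfqpos := bf_pos y₀ α q
    have h9 : δ * ((K + 1) * bf y₀ α q) ≤ δ * laplacian (bf y₀ α) q :=
      mul_le_mul_of_nonneg_left hbar hδpos.le
    have hwqval : w q = u q + δ * bf y₀ α q := by rw [hwdef]
    have hKw : 0 < K * (u q + δ * bf y₀ α q) := by
      rw [← hwqval]; exact mul_pos hKpos hwqpos
    have hδbf2 : 0 < δ * bf y₀ α q := mul_pos hδpos hbfqpos
    linarith [hsplit, hlapw, h9, hlapu, hKw, hδbf2]
  · -- main case: u x₀ > 0
    have h := heq x₀
    rw [max_eq_left hMpos.le] at h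
    have hineq : lam * u x₀ ≤ u x₀ ^ (p - 1) := by
      linarith [mul_nonneg ha.le (neg_nonneg.2 hlapx₀), hIx₀, h]
    have hppos : (0:ℝ) < p - 2 := by linarith
    have hM1 : u x₀ ^ (p - 1) = u x₀ ^ (p - 2) * u x₀ := by
      rw [show p - 1 = (p - 2) + 1 by ring, Real.rpow_add hMpos, Real.rpow_one]
    have hlamle : lam ≤ u x₀ ^ (p - 2) := by
      rw [hM1] at hineq
      exact le_of_mul_le_mul_right hineq hMpos
    calc lam ^ (1 / (p - 2)) ≤ (u x₀ ^ (p - 2)) ^ (1 / (p - 2)) :=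
          Real.rpow_le_rpow hlam.le hlamle (by positivity)
      _ = u x₀ := by
          rw [← Real.rpow_mul hMpos.le, mul_one_div, div_self hppos.ne', Real.rpow_one]
end

section
/- Let N ≥ 1, a > 0, λ > 0, p > 2, and let ν be a finite Borel measure on ℝ^N. Let w : ℝ^N → ℝ be the Gaussian w(x) = exp(−‖x‖²), define Q(w) := a·∫‖∇w(x)‖² dx + ∫∫(w(x+y) − w(x))² dν(y) dx + λ·∫w(x)² dx and, for t ≥ 0, E(t·w) := (t²/2)·Q(w) − (t^p/p)·∫ w(x)^p dx. Then Q(w) and ∫w(x)^p dx are finite and positive, and for every r > 0 there exists t > 0 such that t·Q(w)^{1/2} > r and E(t·w) < 0. -/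
open MeasureTheory InnerProductSpace

private lemma gauss_int (N : ℕ) {b : ℝ} (hb : 0 < b) :
    Integrable (fun x : EuclideanSpace ℝ (Fin N) => Real.exp (-b * ‖x‖ ^ 2)) := by
  have h := (GaussianFourier.integrable_cexp_neg_mul_sq_norm_add (b := (b:ℂ))
    (by simpa using hb) 0 (0 : EuclideanSpace ℝ (Fin N))).norm
  refine h.congr (Filter.Eventually.of_forall fun x => ?_)
  simp only [Complex.norm_exp]
  have : (-(b:ℂ) * (‖x‖:ℂ) ^ 2 + 0 * ((inner ℝ (0 : EuclideanSpace ℝ (Fin N)) x : ℝ) : ℂ))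
      = ((-b * ‖x‖ ^ 2 : ℝ) : ℂ) := by push_cast; ring
  rw [this, Complex.ofReal_re]

private lemma gauss_grad {N : ℕ} (x : EuclideanSpace ℝ (Fin N)) :
    gradient (fun x : EuclideanSpace ℝ (Fin N) => Real.exp (-‖x‖ ^ 2)) x
      = (-2 * Real.exp (-‖x‖ ^ 2)) • x := by
  have h1 : HasFDerivAt (fun x : EuclideanSpace ℝ (Fin N) => -‖x‖ ^ 2)
      (-((2:ℕ) • (innerSL ℝ x))) x := (hasFDerivAt_id x).norm_sq.neg
  have h2 : HasFDerivAt (fun x : EuclideanSpace ℝ (Fin N) => Real.exp (-‖x‖ ^ 2))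
      (Real.exp (-‖x‖ ^ 2) • (-((2:ℕ) • (innerSL ℝ x)))) x :=
    by have := (Real.hasDerivAt_exp (-‖x‖ ^ 2)).comp_hasFDerivAt x h1; exact this
  have h3 : HasGradientAt (fun x : EuclideanSpace ℝ (Fin N) => Real.exp (-‖x‖ ^ 2))
      ((-2 * Real.exp (-‖x‖ ^ 2)) • x) x := by
    rw [hasGradientAt_iff_hasFDerivAt]
    refine h2.congr_fderiv ?_
    ext y
    simp [toDual_apply_apply, real_inner_smul_left, two_smul]
    ring
  exact h3.gradient

private lemma exp_sq (t : ℝ) : Real.exp t ^ 2 = Real.exp (2 * t) := by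
  rw [sq, ← Real.exp_add]; ring_nf

theorem mountain_pass_gaussian_ray
    (N : ℕ) (hN : 1 ≤ N) (a lam p : ℝ)
    (ha : 0 < a) (hlam : 0 < lam) (hp : 2 < p)
    (ν : Measure (EuclideanSpace ℝ (Fin N))) [IsFiniteMeasure ν]
    (w : EuclideanSpace ℝ (Fin N) → ℝ)
    (hw : ∀ x, w x = Real.exp (-‖x‖ ^ 2))
    (Q : ℝ)
    (hQ : Q = a * (∫ x, ‖gradient w x‖ ^ 2)
        + (∫ x, ∫ y, (w (x + y) - w x) ^ 2 ∂ν)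
        + lam * ∫ x, w x ^ 2) :
    Integrable (fun x => ‖gradient w x‖ ^ 2)
      (volume : Measure (EuclideanSpace ℝ (Fin N))) ∧
    Integrable (fun x => ∫ y, (w (x + y) - w x) ^ 2 ∂ν)
      (volume : Measure (EuclideanSpace ℝ (Fin N))) ∧
    Integrable (fun x => w x ^ 2) (volume : Measure (EuclideanSpace ℝ (Fin N))) ∧
    Integrable (fun x => w x ^ p) (volume : Measure (EuclideanSpace ℝ (Fin N))) ∧
    0 < Q ∧
    0 < ∫ x, w x ^ p ∧
    ∀ r > (0 : ℝ), ∃ t > (0 : ℝ),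
      t * Real.sqrt Q > r ∧
      (t ^ 2 / 2) * Q - (t ^ p / p) * (∫ x, w x ^ p) < 0 := by
  have hwf : w = fun x => Real.exp (-‖x‖ ^ 2) := funext hw
  subst hwf
  set E := EuclideanSpace ℝ (Fin N)
  set w : E → ℝ := fun x => Real.exp (-‖x‖ ^ 2) with hwdef
  -- integrability of w^2
  have hI2 : Integrable (fun x : E => w x ^ 2) := by
    refine (gauss_int N (b := 2) two_pos).congr (Filter.Eventually.of_forall fun x => ?_)
    show Real.exp (-2 * ‖x‖ ^ 2) = w x ^ 2
    rw [hw x, exp_sq]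
    congr 1
    ring
  -- integrability of w^p
  have hIp : Integrable (fun x : E => w x ^ p) := by
    refine (gauss_int N (b := p) (by linarith)).congr (Filter.Eventually.of_forall fun x => ?_)
    show Real.exp (-p * ‖x‖ ^ 2) = w x ^ p
    rw [hw x, ← Real.exp_mul]
    congr 1
    ring
  -- integrability of the gradient term
  have hgradsq : ∀ x : E, ‖gradient w x‖ ^ 2 = 4 * Real.exp (-2 * ‖x‖ ^ 2) * ‖x‖ ^ 2 := by
    intro x
    rw [hwdef, gauss_grad x, norm_smul, Real.norm_eq_abs, mul_pow, sq_abs]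
    have h2 : Real.exp (-‖x‖ ^ 2) ^ 2 = Real.exp (-2 * ‖x‖ ^ 2) := by
      rw [exp_sq]; congr 1; ring
    nlinarith [h2]
  have hIgrad : Integrable (fun x : E => ‖gradient w x‖ ^ 2) := by
    refine Integrable.mono' ((gauss_int N (b := 1) one_pos).const_mul 4) ?_
      (Filter.Eventually.of_forall fun x => ?_)
    · have : (fun x : E => ‖gradient w x‖ ^ 2)
          = fun x : E => 4 * Real.exp (-2 * ‖x‖ ^ 2) * ‖x‖ ^ 2 := funext hgradsq
      rw [this]
      exact (by fun_prop : Continuous fun x : E =>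
        4 * Real.exp (-2 * ‖x‖ ^ 2) * ‖x‖ ^ 2).aestronglyMeasurable
    · rw [Real.norm_eq_abs, abs_of_nonneg (by positivity), hgradsq x]
      have ht : ‖x‖ ^ 2 ≤ Real.exp (‖x‖ ^ 2) := by
        nlinarith [Real.add_one_le_exp (‖x‖ ^ 2)]
      have h1 : 4 * Real.exp (-2 * ‖x‖ ^ 2) * ‖x‖ ^ 2
          ≤ 4 * Real.exp (-2 * ‖x‖ ^ 2) * Real.exp (‖x‖ ^ 2) :=
        mul_le_mul_of_nonneg_left ht (by positivity)
      have h2 : 4 * Real.exp (-2 * ‖x‖ ^ 2) * Real.exp (‖x‖ ^ 2)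
          = 4 * Real.exp (-1 * ‖x‖ ^ 2) := by
        rw [mul_assoc, ← Real.exp_add]; congr 2; ring
      linarith
  -- nonlocal term
  have hGc : Continuous (fun q : E × E => (w (q.2 + q.1) - w q.2) ^ 2) := by
    rw [hwdef]; fun_prop
  have hGm : AEStronglyMeasurable (fun q : E × E => (w (q.2 + q.1) - w q.2) ^ 2)
      (ν.prod volume) := hGc.aestronglyMeasurable
  have hfix : ∀ y : E, Integrable (fun x : E => (w (x + y) - w x) ^ 2) := by
    intro y
    have h1 : Integrable (fun x : E => w (x + y) ^ 2) := hI2.comp_add_right y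
    refine Integrable.mono' ((h1.const_mul 2).add (hI2.const_mul 2)) ?_
      (Filter.Eventually.of_forall fun x => ?_)
    · exact (by rw [hwdef]; fun_prop :
        Continuous fun x : E => (w (x + y) - w x) ^ 2).aestronglyMeasurable
    · have hb : ‖(w (x + y) - w x) ^ 2‖ ≤ 2 * w (x + y) ^ 2 + 2 * w x ^ 2 := by
        rw [Real.norm_eq_abs, abs_of_nonneg (sq_nonneg _)]
        nlinarith [sq_nonneg (w (x + y) + w x)]
      simpa using hb
  have hG : Integrable (fun q : E × E => (w (q.2 + q.1) - w q.2) ^ 2) (ν.prod volume) := by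
    rw [integrable_prod_iff hGm]
    constructor
    · exact Filter.Eventually.of_forall fun y => hfix y
    · refine Integrable.mono' (integrable_const (4 * ∫ x : E, w x ^ 2)) ?_
        (Filter.Eventually.of_forall fun y => ?_)
      · exact hGm.norm.integral_prod_right'
      · have h1 : Integrable (fun x : E => w (x + y) ^ 2) := hI2.comp_add_right y
        have hb : (∫ x : E, ‖(w (x + y) - w x) ^ 2‖)
            = ∫ x : E, (w (x + y) - w x) ^ 2 := by
          congr 1; funext x; rw [Real.norm_eq_abs, abs_of_nonneg (sq_nonneg _)]
        have hmono : (∫ x : E, (w (x + y) - w x) ^ 2)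
            ≤ ∫ x : E, (2 * w (x + y) ^ 2 + 2 * w x ^ 2) := by
          refine integral_mono (hfix y) ((h1.const_mul 2).add (hI2.const_mul 2)) fun x => ?_
          have : (w (x + y) - w x) ^ 2 ≤ 2 * w (x + y) ^ 2 + 2 * w x ^ 2 := by
            nlinarith [sq_nonneg (w (x + y) + w x)]
          simpa using this
        have htrans : (∫ x : E, w (x + y) ^ 2) = ∫ x : E, w x ^ 2 :=
          integral_add_right_eq_self (fun x : E => w x ^ 2) y
        rw [integral_add (h1.const_mul 2) (hI2.const_mul 2), integral_const_mul,
          integral_const_mul, htrans] at hmono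
        have hnn : 0 ≤ ∫ x : E, ‖(w (x + y) - w x) ^ 2‖ :=
          integral_nonneg fun x => norm_nonneg _
        rw [Real.norm_eq_abs, abs_of_nonneg hnn, hb]
        linarith
  have hInl : Integrable (fun x : E => ∫ y, (w (x + y) - w x) ^ 2 ∂ν) :=
    hG.integral_prod_right
  -- positivity
  have hvol : (0 : ENNReal) < volume (Set.univ : Set E) :=
    isOpen_univ.measure_pos volume ⟨0, trivial⟩
  have hI2pos : 0 < ∫ x : E, w x ^ 2 := by
    rw [integral_pos_iff_support_of_nonneg (fun x => sq_nonneg _) hI2]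
    have hsupp : Function.support (fun x : E => w x ^ 2) = Set.univ :=
      Set.eq_univ_of_forall fun x => Function.mem_support.mpr (by rw [hw x]; positivity)
    rw [hsupp]; exact hvol
  have hIppos : 0 < ∫ x : E, w x ^ p := by
    rw [integral_pos_iff_support_of_nonneg
      (fun x => by rw [hw x]; positivity : ∀ x : E, 0 ≤ w x ^ p) hIp]
    have hsupp : Function.support (fun x : E => w x ^ p) = Set.univ :=
      Set.eq_univ_of_forall fun x => Function.mem_support.mpr (by
        rw [hw x]
        exact ne_of_gt (Real.rpow_pos_of_pos (Real.exp_pos _) p))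
    rw [hsupp]; exact hvol
  have hQpos : 0 < Q := by
    have h1 : 0 ≤ ∫ x : E, ‖gradient w x‖ ^ 2 := integral_nonneg fun x => sq_nonneg _
    have h2 : 0 ≤ ∫ x : E, ∫ y, (w (x + y) - w x) ^ 2 ∂ν :=
      integral_nonneg fun x => integral_nonneg fun y => sq_nonneg _
    nlinarith
  refine ⟨hIgrad, hInl, hI2, hIp, hQpos, hIppos, ?_⟩
  -- final: for every r > 0 find t
  intro r hr
  set I := ∫ x : E, w x ^ p with hI
  clear_value I
  clear hI hIp
  have hsq : 0 < Real.sqrt Q := Real.sqrt_pos.mpr hQpos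
  set c := p * Q / (2 * I) with hc
  have hcpos : 0 < c := by rw [hc]; positivity
  clear_value c
  set t := max (r / Real.sqrt Q) (c ^ (1 / (p - 2))) + 1 with htdef
  have ht1 : r / Real.sqrt Q < t := by
    have := le_max_left (r / Real.sqrt Q) (c ^ (1 / (p - 2)))
    rw [htdef]; linarith
  have ht2 : c ^ (1 / (p - 2)) < t := by
    have := le_max_right (r / Real.sqrt Q) (c ^ (1 / (p - 2)))
    rw [htdef]; linarith
  clear_value t
  have ht0 : 0 < t := lt_of_le_of_lt (by positivity) ht1
  refine ⟨t, ht0, ?_, ?_⟩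
  · rw [gt_iff_lt, ← div_lt_iff₀ hsq]
    exact ht1
  · have hp2 : 0 < p - 2 := by linarith
    have hs : c < t ^ (p - 2) := by
      have h := Real.rpow_lt_rpow (Real.rpow_nonneg hcpos.le _) ht2 hp2
      rwa [← Real.rpow_mul hcpos.le, one_div, inv_mul_cancel₀ (ne_of_gt hp2),
        Real.rpow_one] at h
    have htp : t ^ p = t ^ 2 * t ^ (p - 2) := by
      have h1 : t ^ p = t ^ ((2 : ℝ) + (p - 2)) := by norm_num
      rw [h1, Real.rpow_add ht0]
      congr 1
      rw [show ((2:ℝ) = ((2:ℕ):ℝ)) by norm_num, Real.rpow_natCast]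
    set s := t ^ (p - 2) with hsdef
    clear_value s
    have hsI : p * Q / 2 < s * I := by
      have h := mul_lt_mul_of_pos_right hs hIppos
      have hcI : c * I = p * Q / 2 := by
        rw [hc]; field_simp
      rw [hcI] at h; exact h
    have ht2pos : 0 < t ^ 2 := by positivity
    have hppos : 0 < p := by linarith
    have key : t ^ 2 / 2 * Q < t ^ 2 * s / p * I := by
      rw [div_mul_eq_mul_div, div_mul_eq_mul_div, div_lt_div_iff₀ two_pos hppos]
      nlinarith [mul_lt_mul_of_pos_left hsI ht2pos]
    rw [htp]
    linarith
end
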